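/- arXiv:2511.22811 — 3 statements merged into one kernel-verified Lean document; each statement's English description precedes it below -/
import Mathlib

section
/- Let p ≥ 7 be prime and m a positive integer with m ∉ {1,2,3,4,6,8,12} and φ(m) ≤ 8 (Euler totient). If ζ_m is a primitive m-th root of unity in ℚ̄, then [ℚ(ζ_m √p) : ℚ] > 4. -/
open Polynomial IntermediateField

/-- Small totient values: if `φ k ≤ 3` then `k ∈ {1,2,3,4,6}`. -/
lemma totient_le_three (k : ℕ) (hk : 0 < k) (h : Nat.totient k ≤ 3) :
    k = 1 ∨ k = 2 ∨ k = 3 ∨ k = 4 ∨ k = 6 := by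
  have hk0 : k ≠ 0 := hk.ne'
  have hφpos : 0 < Nat.totient k := Nat.totient_pos.mpr hk
  -- every prime factor of k is ≤ 3
  have hq : ∀ q : ℕ, q.Prime → q ∣ k → q ≤ 3 := by
    intro q hqp hqk
    have h1 : Nat.totient q ∣ Nat.totient k := Nat.totient_dvd_of_dvd hqk
    rw [Nat.totient_prime hqp] at h1
    have h2 : q - 1 ≤ 3 := le_trans (Nat.le_of_dvd hφpos h1) h
    have hq2 := hqp.two_le
    have hq4 : q ≤ 4 := by omega
    interval_cases q
    · omega
    · omega
    · exact absurd hqp (by norm_num)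
  have h8 : ¬ (8 ∣ k) := by
    intro h8
    have := Nat.totient_dvd_of_dvd h8
    rw [(by decide : Nat.totient 8 = 4)] at this
    exact absurd (Nat.le_of_dvd hφpos this) (by omega)
  have h9 : ¬ (9 ∣ k) := by
    intro h9
    have := Nat.totient_dvd_of_dvd h9
    rw [(by decide : Nat.totient 9 = 6)] at this
    exact absurd (Nat.le_of_dvd hφpos this) (by omega)
  have hdvd : k ∣ 12 := by
    rw [← Nat.factorization_le_iff_dvd hk0 (by norm_num)]
    intro p
    by_cases hp : p.Prime
    · by_cases hpk : p ∣ k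
      · have hple := hq p hp hpk
        have hp2 := hp.two_le
        interval_cases p
        · -- p = 2
          have hf2 : Nat.factorization 12 2 = 2 := by
            have hpp : Nat.Prime 2 := Nat.prime_two
            have ha := (hpp.pow_dvd_iff_le_factorization (k := 2) (n := 12) (by norm_num)).mp
              (by norm_num)
            have hb : Nat.factorization 12 2 ≤ 2 := by
              by_contra hcon
              push_neg at hcon
              exact (by norm_num : ¬ (2:ℕ)^3 ∣ 12)
                ((hpp.pow_dvd_iff_le_factorization (n := 12) (by norm_num)).mpr hcon)
            omega
          have hb : Nat.factorization k 2 ≤ 2 := by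
            by_contra hcon
            push_neg at hcon
            exact h8 ((Nat.prime_two.pow_dvd_iff_le_factorization hk0).mpr hcon)
          omega
        · -- p = 3
          have hf3 : Nat.factorization 12 3 = 1 := by
            have hpp : Nat.Prime 3 := by norm_num
            have ha := (hpp.pow_dvd_iff_le_factorization (k := 1) (n := 12) (by norm_num)).mp
              (by norm_num)
            have hb : Nat.factorization 12 3 ≤ 1 := by
              by_contra hcon
              push_neg at hcon
              exact (by norm_num : ¬ (3:ℕ)^2 ∣ 12)
                ((hpp.pow_dvd_iff_le_factorization (n := 12) (by norm_num)).mpr hcon)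
            omega
          have hb : Nat.factorization k 3 ≤ 1 := by
            by_contra hcon
            push_neg at hcon
            exact h9 (((by norm_num : Nat.Prime 3).pow_dvd_iff_le_factorization hk0).mpr hcon)
          omega
      · rw [Nat.factorization_eq_zero_of_not_dvd hpk]
        exact Nat.zero_le _
    · rw [Nat.factorization_eq_zero_of_not_prime k hp]
      exact Nat.zero_le _
  have hle : k ≤ 12 := Nat.le_of_dvd (by norm_num) hdvd
  interval_cases k <;> revert h hdvd <;> decide

/-- Descent lemma: if `ζ` is a primitive `n`-th root of unity with `p ∤ n`, `p` prime,
then no equation `(P(ζ))² = D² p ζ^j` with `D ≠ 0` is possible. -/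
lemma descent (p n : ℕ) (hp : p.Prime) (hn : 0 < n) (hpn : ¬ p ∣ n) (ζ : ℂ)
    (hζ : IsPrimitiveRoot ζ n) (j : ℕ) :
    ∀ N : ℕ, ∀ D : ℤ, D.natAbs ≤ N → D ≠ 0 → ∀ P : ℤ[X],
      (aeval ζ P) ^ 2 = (D : ℂ) ^ 2 * p * ζ ^ j → False := by
  haveI : Fact p.Prime := ⟨hp⟩
  have hζint : IsIntegral ℤ ζ := hζ.isIntegral hn
  have hζn : ζ ^ n = 1 := hζ.pow_eq_one
  have hp0C : (p : ℂ) ≠ 0 := Nat.cast_ne_zero.mpr hp.pos.ne'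
  intro N
  induction N with
  | zero =>
    intro D hD hD0 P h
    exact hD0 (Int.natAbs_eq_zero.mp (Nat.le_zero.mp hD))
  | succ N ih =>
    intro D hDN hD0 P h
    set f : ℤ →+* ZMod p := Int.castRingHom (ZMod p) with hf
    -- the polynomial Q vanishes at ζ
    have haQ : aeval ζ (P ^ 2 - C (D ^ 2 * (p : ℤ)) * X ^ j) = 0 := by
      simp only [map_sub, map_pow, map_mul, aeval_C, aeval_X, h, algebraMap_int_eq,
        Int.coe_castRingHom]
      push_cast
      ring
    have hdvd : cyclotomic n ℤ ∣ P ^ 2 - C (D ^ 2 * (p : ℤ)) * X ^ j := by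
      rw [cyclotomic_eq_minpoly hζ hn]
      exact minpoly.isIntegrallyClosed_dvd hζint haQ
    obtain ⟨R0, hR0⟩ := hdvd
    -- reduce mod p
    have hmap : (P.map f) ^ 2 = cyclotomic n (ZMod p) * R0.map f := by
      have := congrArg (Polynomial.map f) hR0
      rw [Polynomial.map_sub, Polynomial.map_pow, Polynomial.map_mul, Polynomial.map_pow,
        Polynomial.map_C, Polynomial.map_mul, Polynomial.map_X, map_cyclotomic] at this
      have hC : f (D ^ 2 * (p : ℤ)) = 0 := by
        simp only [hf, Int.coe_castRingHom]
        rw [ZMod.intCast_zmod_eq_zero_iff_dvd]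
        exact dvd_mul_left _ _
      rw [hC] at this
      simpa using this
    -- cyclotomic mod p is squarefree
    have hsq : Squarefree (cyclotomic n (ZMod p)) := by
      have hne : ((n : ℕ) : ZMod p) ≠ 0 := by
        rw [Ne, ZMod.natCast_eq_zero_iff]
        exact hpn
      exact Squarefree.squarefree_of_dvd (cyclotomic.dvd_X_pow_sub_one n (ZMod p))
        (X_pow_sub_one_separable_iff.mpr hne).squarefree
    have hdvdP : cyclotomic n (ZMod p) ∣ P.map f := by
      rw [← hsq.dvd_pow_iff_dvd (two_ne_zero)]
      exact ⟨R0.map f, hmap⟩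
    obtain ⟨R1, hR1⟩ := hdvdP
    obtain ⟨R, hR⟩ := Polynomial.map_surjective f ZMod.intCast_surjective R1
    -- P - cyclotomic * R has all coefficients divisible by p
    have hTmap : (P - cyclotomic n ℤ * R).map f = 0 := by
      rw [Polynomial.map_sub, Polynomial.map_mul, map_cyclotomic, hR, ← hR1]
      ring
    have hCdvd : C ((p : ℤ)) ∣ P - cyclotomic n ℤ * R := by
      rw [C_dvd_iff_dvd_coeff]
      intro i
      have hzero : f ((P - cyclotomic n ℤ * R).coeff i) = 0 := by
        rw [← Polynomial.coeff_map, hTmap, Polynomial.coeff_zero]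
      rw [hf, Int.coe_castRingHom] at hzero
      exact_mod_cast (ZMod.intCast_zmod_eq_zero_iff_dvd _ p).mp hzero
    obtain ⟨S, hS⟩ := hCdvd
    -- aeval ζ P = p * aeval ζ S
    have hcycζ : aeval ζ (cyclotomic n ℤ) = 0 := by
      rw [cyclotomic_eq_minpoly hζ hn]
      exact minpoly.aeval ℤ ζ
    have hPζ : aeval ζ P = (p : ℂ) * aeval ζ S := by
      have hPeq : P = cyclotomic n ℤ * R + C ((p : ℤ)) * S := by
        rw [← hS]; ring
      rw [hPeq]
      simp [hcycζ]
    -- divide out one p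
    have key : (p : ℂ) * (aeval ζ S) ^ 2 = (D : ℂ) ^ 2 * ζ ^ j := by
      have h2 : ((p : ℂ) * aeval ζ S) ^ 2 = (D : ℂ) ^ 2 * (p : ℂ) * ζ ^ j := by
        rw [← hPζ]; exact h
      apply mul_left_cancel₀ hp0C
      linear_combination h2
    -- ζ^j * ζ^((n-1)*j) = 1
    have hζinv : ζ ^ j * ζ ^ ((n - 1) * j) = 1 := by
      rw [← pow_add]
      have heq : j + (n - 1) * j = n * j := by
        rw [Nat.sub_one_mul]
        have hj : j ≤ n * j := Nat.le_mul_of_pos_left j hn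
        omega
      rw [heq, pow_mul, hζn, one_pow]
    set y : ℂ := (aeval ζ S) ^ 2 * ζ ^ ((n - 1) * j) with hy
    have hpy : (p : ℂ) * y = (D : ℂ) ^ 2 := by
      rw [hy]
      calc (p : ℂ) * ((aeval ζ S) ^ 2 * ζ ^ ((n - 1) * j))
          = ((p : ℂ) * (aeval ζ S) ^ 2) * ζ ^ ((n - 1) * j) := by ring
        _ = ((D : ℂ) ^ 2 * ζ ^ j) * ζ ^ ((n - 1) * j) := by rw [key]
        _ = (D : ℂ) ^ 2 * (ζ ^ j * ζ ^ ((n - 1) * j)) := by ring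
        _ = (D : ℂ) ^ 2 := by rw [hζinv, mul_one]
    -- y is integral over ℤ
    have hyint : IsIntegral ℤ y := by
      have hadj : Algebra.adjoin ℤ ({ζ} : Set ℂ) ≤ integralClosure ℤ ℂ :=
        Algebra.adjoin_le (by simpa [mem_integralClosure_iff] using hζint)
      have h1 : IsIntegral ℤ (aeval ζ S) := hadj (aeval_mem_adjoin_singleton ℤ ζ)
      exact (h1.pow 2).mul (hζint.pow _)
    -- y is rational, hence an integer
    have hyq : y = algebraMap ℚ ℂ ((D : ℚ) ^ 2 / (p : ℚ)) := by
      have : (algebraMap ℚ ℂ) ((D : ℚ) ^ 2 / (p : ℚ)) = (D : ℂ) ^ 2 / (p : ℂ) := by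
        push_cast
        rfl
      rw [this, eq_div_iff hp0C, mul_comm, hpy]
    obtain ⟨z, hz⟩ : ∃ z : ℤ, (algebraMap ℤ ℚ) z = (D : ℚ) ^ 2 / (p : ℚ) := by
      rw [← IsIntegrallyClosed.isIntegral_iff]
      rw [← isIntegral_algebraMap_iff (algebraMap ℚ ℂ).injective]
      rwa [hyq] at hyint
    rw [show (algebraMap ℤ ℚ) z = (z : ℚ) from by simp [algebraMap_int_eq]] at hz
    have hpz : (p : ℤ) * z = D ^ 2 := by
      have hq : (p : ℚ) * (z : ℚ) = (D : ℚ) ^ 2 := by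
        rw [hz, mul_div_cancel₀]
        exact Nat.cast_ne_zero.mpr hp.pos.ne'
      exact_mod_cast hq
    -- p ∣ D
    have hpI : Prime (p : ℤ) := Nat.prime_iff_prime_int.mp hp
    have hpD : (p : ℤ) ∣ D := hpI.dvd_of_dvd_pow (n := 2) ⟨z, hpz.symm⟩
    obtain ⟨D', hD'⟩ := hpD
    have hz' : z = (p : ℤ) * D' ^ 2 := by
      have hpne : (p : ℤ) ≠ 0 := Int.natCast_ne_zero.mpr hp.pos.ne'
      apply mul_left_cancel₀ hpne
      rw [hpz, hD']
      ring
    -- new equation with D'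
    have hynew : y = (D' : ℂ) ^ 2 * (p : ℂ) := by
      have hzq : ((D : ℚ) ^ 2 / (p : ℚ)) = ((p : ℚ) * (D' : ℚ) ^ 2) := by
        rw [← hz, hz']; push_cast; ring
      rw [hyq, hzq, eq_ratCast (algebraMap ℚ ℂ)]
      push_cast
      ring
    have hnew : (aeval ζ S) ^ 2 = (D' : ℂ) ^ 2 * (p : ℂ) * ζ ^ j := by
      have hζinv' : ζ ^ ((n - 1) * j) * ζ ^ j = 1 := by rw [mul_comm]; exact hζinv
      have hstep : (aeval ζ S) ^ 2 = y * ζ ^ j := by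
        rw [hy]
        calc (aeval ζ S) ^ 2 = (aeval ζ S) ^ 2 * (ζ ^ ((n - 1) * j) * ζ ^ j) := by
              rw [hζinv', mul_one]
        _ = (aeval ζ S) ^ 2 * ζ ^ ((n - 1) * j) * ζ ^ j := by ring
      rw [hstep, hynew]
    have hD'0 : D' ≠ 0 := by
      intro hcon
      rw [hcon, mul_zero] at hD'
      exact hD0 hD'
    have hD'N : D'.natAbs ≤ N := by
      have h1 : D.natAbs = p * D'.natAbs := by
        rw [hD', Int.natAbs_mul, Int.natAbs_natCast]
      have h2 : 1 ≤ D'.natAbs := Nat.one_le_iff_ne_zero.mpr (Int.natAbs_ne_zero.mpr hD'0)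
      have h3 : 2 * D'.natAbs ≤ p * D'.natAbs := Nat.mul_le_mul_right _ hp.two_le
      omega
    exact ih D' hD'N hD'0 S hnew

/-- Main helper: if `α² = ζ' p` with `ζ'` a primitive `n`-th root of unity and `φ(n) ≥ 4`,
then `[ℚ(α) : ℚ] > 4`. -/
lemma helper (p n : ℕ) (hp : p.Prime) (hp7 : 7 ≤ p) (hn : 0 < n)
    (hphi4 : 4 ≤ Nat.totient n) (ζ' α : ℂ) (hζ' : IsPrimitiveRoot ζ' n)
    (hα : α ^ 2 = ζ' * p) :
    4 < Module.finrank ℚ ↥(IntermediateField.adjoin ℚ ({α} : Set ℂ)) := by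
  have hp0C : (p : ℂ) ≠ 0 := Nat.cast_ne_zero.mpr hp.pos.ne'
  have hζ'intZ : IsIntegral ℤ ζ' := hζ'.isIntegral hn
  have hζ'int : IsIntegral ℚ ζ' := hζ'intZ.tower_top
  have hαint : IsIntegral ℚ α := by
    have hroot : α ^ (2 * n) = algebraMap ℚ ℂ ((p : ℚ) ^ n) := by
      rw [pow_mul, hα, mul_pow, hζ'.pow_eq_one, one_mul]
      push_cast
      ring
    refine ⟨X ^ (2 * n) - C ((p : ℚ) ^ n), monic_X_pow_sub_C _ (by omega), ?_⟩
    simp [hroot]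
  haveI hK : FiniteDimensional ℚ ↥(IntermediateField.adjoin ℚ ({α} : Set ℂ)) :=
    IntermediateField.adjoin.finiteDimensional hαint
  have hαmem : α ∈ IntermediateField.adjoin ℚ ({α} : Set ℂ) :=
    IntermediateField.subset_adjoin ℚ _ rfl
  have hζ'mem : ζ' ∈ IntermediateField.adjoin ℚ ({α} : Set ℂ) := by
    have hform : ζ' = α ^ 2 * ((p : ℂ))⁻¹ := by
      rw [hα]
      field_simp
    rw [hform]
    refine mul_mem (pow_mem hαmem 2) (inv_mem ?_)
    exact_mod_cast IntermediateField.natCast_mem _ p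
  have hFle : IntermediateField.adjoin ℚ ({ζ'} : Set ℂ) ≤
      IntermediateField.adjoin ℚ ({α} : Set ℂ) := by
    rw [IntermediateField.adjoin_le_iff]
    simpa using hζ'mem
  have hFrank : Module.finrank ℚ ↥(IntermediateField.adjoin ℚ ({ζ'} : Set ℂ)) =
      Nat.totient n := by
    rw [IntermediateField.adjoin.finrank hζ'int, ← cyclotomic_eq_minpoly_rat hζ' hn,
      natDegree_cyclotomic]
  by_cases hpn : p ∣ n
  · -- then φ(n) ≥ p - 1 ≥ 6
    have h1 : (p - 1) ∣ Nat.totient n := by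
      have := Nat.totient_dvd_of_dvd hpn
      rwa [Nat.totient_prime hp] at this
    have h2 : 0 < Nat.totient n := Nat.totient_pos.mpr hn
    have h6 : 6 ≤ Nat.totient n := le_trans (by omega) (Nat.le_of_dvd h2 h1)
    have hmono : Module.finrank ℚ ↥(IntermediateField.adjoin ℚ ({ζ'} : Set ℂ)) ≤
        Module.finrank ℚ ↥(IntermediateField.adjoin ℚ ({α} : Set ℂ)) := by
      haveI : Module.Finite ℚ
          ↥(Subalgebra.toSubmodule (IntermediateField.adjoin ℚ ({α} : Set ℂ)).toSubalgebra) := hK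
      exact Submodule.finrank_mono (Subalgebra.toSubmodule.monotone
        (IntermediateField.toSubalgebra_le_toSubalgebra.mpr hFle))
    omega
  · -- p does not divide n : use descent
    have hαnot : α ∉ IntermediateField.adjoin ℚ ({ζ'} : Set ℂ) := by
      intro habs
      have habs' : α ∈ Algebra.adjoin ℚ ({ζ'} : Set ℂ) := by
        rw [← IntermediateField.adjoin_simple_toSubalgebra_of_isAlgebraic hζ'int.isAlgebraic]
        exact habs
      rw [Algebra.adjoin_singleton_eq_range_aeval] at habs'
      obtain ⟨q, hq⟩ := habs'
      obtain ⟨b, hb⟩ := IsLocalization.integerNormalization_map_to_map (nonZeroDivisors ℤ) q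
      set P : ℤ[X] := IsLocalization.integerNormalization (nonZeroDivisors ℤ) q with hPdef
      have hbne : (b : ℤ) ≠ 0 := nonZeroDivisors.coe_ne_zero b
      have haP : aeval ζ' P = ((b : ℤ) : ℂ) * α := by
        rw [← aeval_map_algebraMap ℚ ζ' P, hb, ← hq]
        simp [zsmul_eq_mul]
      have heq : (aeval ζ' P) ^ 2 = ((b : ℤ) : ℂ) ^ 2 * p * ζ' ^ 1 := by
        rw [haP, mul_pow, hα, pow_one]
        ring
      exact descent p n hp hn hpn ζ' hζ' 1 (b : ℤ).natAbs (b : ℤ) le_rfl hbne P heq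
    have hlt : IntermediateField.adjoin ℚ ({ζ'} : Set ℂ) <
        IntermediateField.adjoin ℚ ({α} : Set ℂ) := by
      refine lt_of_le_of_ne hFle ?_
      intro hcon
      rw [hcon] at hαnot
      exact hαnot hαmem
    have hstrict : Module.finrank ℚ ↥(IntermediateField.adjoin ℚ ({ζ'} : Set ℂ)) <
        Module.finrank ℚ ↥(IntermediateField.adjoin ℚ ({α} : Set ℂ)) := by
      haveI : Module.Finite ℚ
          ↥(Subalgebra.toSubmodule (IntermediateField.adjoin ℚ ({α} : Set ℂ)).toSubalgebra) := hK
      exact Submodule.finrank_lt_finrank_of_lt (Subalgebra.toSubmodule.strictMono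
        (IntermediateField.toSubalgebra_lt_toSubalgebra.mpr hlt))
    omega

theorem stmt1 (p : ℕ) (hp : p.Prime) (hp7 : 7 ≤ p) (m : ℕ) (hm0 : 0 < m)
    (hm : m ∉ ({1, 2, 3, 4, 6, 8, 12} : Set ℕ)) (hphi : Nat.totient m ≤ 8)
    (ζ : ℂ) (hζ : IsPrimitiveRoot ζ m) (s : ℂ) (hs : s ^ 2 = (p : ℂ)) :
    4 < Module.finrank ℚ ↥(IntermediateField.adjoin ℚ ({ζ * s} : Set ℂ)) := by
  simp only [Set.mem_insert_iff, Set.mem_singleton_iff] at hm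
  push_neg at hm
  have hα : (ζ * s) ^ 2 = ζ ^ 2 * p := by
    rw [mul_pow, hs]
  rcases Nat.even_or_odd m with hme | hmo
  · -- m even : ζ² is a primitive (m/2)-th root of unity
    obtain ⟨k, hk⟩ := hme
    have hkm : m = 2 * k := by omega
    have hk0 : 0 < k := by omega
    have hζ2 : IsPrimitiveRoot (ζ ^ 2) k := IsPrimitiveRoot.pow hm0 hζ hkm
    have hphi4 : 4 ≤ Nat.totient k := by
      by_contra hcon
      push_neg at hcon
      rcases totient_le_three k hk0 (by omega) with h | h | h | h | h <;> omega
    exact helper p k hp hp7 hk0 hphi4 (ζ ^ 2) (ζ * s) hζ2 hα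
  · -- m odd : ζ² is a primitive m-th root of unity
    have hcop : Nat.Coprime 2 m := Nat.coprime_two_left.mpr hmo
    have hζ2 : IsPrimitiveRoot (ζ ^ 2) m := hζ.pow_of_coprime 2 hcop
    have hphi4 : 4 ≤ Nat.totient m := by
      by_contra hcon
      push_neg at hcon
      rcases totient_le_three m hm0 (by omega) with h | h | h | h | h <;> omega
    exact helper p m hp hp7 hm0 hphi4 (ζ ^ 2) (ζ * s) hζ2 hα
end

section
/- Let p ≥ 5 be prime, ε ∈ {0,1,−1}, and a, b ∈ ℚ_p with ab ≠ −1. Set c = −(a² + εp + b²p²)/(ab+1). Then v_p(c) ≥ 1 if and only if (v_p(a) ≥ 1 and v_p(b) ≥ 0) or v_p(a) = v_p(b) + 1. -/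
section stmt6aux
variable {p : ℕ} [Fact p.Prime]

private lemma wt_cancel_ge {u : WithTop ℤ} {d n : ℤ} (h : (n : WithTop ℤ) ≤ u + (d : WithTop ℤ)) :
    ((n - d : ℤ) : WithTop ℤ) ≤ u := by
  cases u with
  | top => exact le_top
  | coe u =>
    rw [← WithTop.coe_add, WithTop.coe_le_coe] at h
    rw [WithTop.coe_le_coe]; omega

private lemma wt_cancel_le {u w : WithTop ℤ} {n m : ℤ}
    (h : u + w = (n : WithTop ℤ)) (hw : (m : WithTop ℤ) ≤ w) :
    u ≤ ((n - m : ℤ) : WithTop ℤ) := by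
  cases u with
  | top => simp at h
  | coe u =>
    cases w with
    | top => simp at h
    | coe w =>
      rw [← WithTop.coe_add, WithTop.coe_eq_coe] at h
      rw [WithTop.coe_le_coe] at hw
      rw [WithTop.coe_le_coe]; omega

private lemma vval_iff (x : ℚ_[p]) (m : ℤ) :
    (x = 0 ∨ m ≤ x.valuation) ↔ (m : WithTop ℤ) ≤ Padic.addValuation x := by
  by_cases hx : x = 0
  · refine iff_of_true (Or.inl hx) ?_
    rw [hx]
    rw [show Padic.addValuation (0 : ℚ_[p]) = ⊤ from AddValuation.map_zero _]
    exact le_top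
  · rw [Padic.addValuation.apply hx, WithTop.coe_le_coe]
    simp [hx]

end stmt6aux

/-- for `p ≥ 5` prime, `ε ∈ {0,1,-1}` and `a b : ℚ_p` with `ab ≠ -1`,
setting `c = -(a² + εp + b²p²)/(ab+1)`, one has `v_p(c) ≥ 1` iff
(`v_p(a) ≥ 1` and `v_p(b) ≥ 0`) or `v_p(a) = v_p(b) + 1`.  The convention
`v_p(0) = +∞` is encoded by treating the case of a vanishing argument separately. -/
theorem stmt6 (p : ℕ) [Fact p.Prime] (hp5 : 5 ≤ p)
    (ε : ℚ_[p]) (hε : ε = 0 ∨ ε = 1 ∨ ε = -1)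
    (a b : ℚ_[p]) (hab : a * b ≠ -1)
    (c : ℚ_[p]) (hc : c = -(a ^ 2 + ε * p + b ^ 2 * (p : ℚ_[p]) ^ 2) / (a * b + 1)) :
    (c = 0 ∨ 1 ≤ c.valuation) ↔
      (((a = 0 ∨ 1 ≤ a.valuation) ∧ (b = 0 ∨ 0 ≤ b.valuation)) ∨
        (a ≠ 0 ∧ b ≠ 0 ∧ a.valuation = b.valuation + 1)) := by
  set V : AddValuation ℚ_[p] (WithTop ℤ) := Padic.addValuation with hVdef
  have hVap : ∀ x : ℚ_[p], x ≠ 0 → V x = (x.valuation : WithTop ℤ) :=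
    fun x hx => Padic.addValuation.apply hx
  have hd : a * b + 1 ≠ 0 := fun h => hab (eq_neg_of_add_eq_zero_left h)
  have hp0 : (p : ℚ_[p]) ≠ 0 := Nat.cast_ne_zero.mpr (Fact.out (p := p.Prime)).ne_zero
  have hVp : V (p : ℚ_[p]) = ((1 : ℤ) : WithTop ℤ) := by
    rw [hVap _ hp0, Padic.valuation_p]
  have hεp : ((1 : ℤ) : WithTop ℤ) ≤ V (ε * (p : ℚ_[p])) := by
    rcases hε with h | h | h
    · rw [h, zero_mul, show V (0 : ℚ_[p]) = ⊤ from AddValuation.map_zero _]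
      exact le_top
    · rw [h, one_mul, hVp]
    · rw [h, neg_one_mul, V.map_neg, hVp]
  have hsq : ∀ x : ℚ_[p], V (x ^ 2) = V x + V x := fun x => by rw [sq, V.map_mul]
  have hNc : V (a ^ 2 + ε * p + b ^ 2 * (p : ℚ_[p]) ^ 2) = V c + V (a * b + 1) := by
    have h1 : a ^ 2 + ε * p + b ^ 2 * (p : ℚ_[p]) ^ 2 = -(c * (a * b + 1)) := by
      rw [hc]; field_simp
    rw [h1, V.map_neg, V.map_mul]
  have hmin3 : ∀ x y z : ℚ_[p], V x < V y → V x < V z → V (x + y + z) = V x := by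
    intro x y z h1 h2
    have h3 : V (x + y) = V x := V.map_add_eq_of_lt_left h1
    rw [V.map_add_eq_of_lt_left (h3 ▸ h2 : V (x + y) < V z), h3]
  have hmin3' : ∀ x y z : ℚ_[p], V z < V x → V z < V y → V (x + y + z) = V z := by
    intro x y z h1 h2
    exact V.map_add_eq_of_lt_right (lt_of_lt_of_le (lt_min h1 h2) (V.map_add x y))
  have hge3 : ∀ (x y z : ℚ_[p]) (g : WithTop ℤ), g ≤ V x → g ≤ V y → g ≤ V z →
      g ≤ V (x + y + z) := fun x y z g hx hy hz => V.map_le_add (V.map_le_add hx hy) hz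
  rw [vval_iff c 1, vval_iff a 1, vval_iff b 0]
  simp only [← hVdef]
  by_cases ha : a = 0
  · by_cases hb : b = 0
    · -- a = 0, b = 0
      refine iff_of_true ?_ (Or.inl ⟨by rw [ha, show V (0:ℚ_[p]) = ⊤ from AddValuation.map_zero _]; exact le_top,
        by rw [hb, show V (0:ℚ_[p]) = ⊤ from AddValuation.map_zero _]; exact le_top⟩)
      rw [show a ^ 2 + ε * p + b ^ 2 * (p : ℚ_[p]) ^ 2 = ε * p from by rw [ha, hb]; ring,
        show a * b + 1 = (1 : ℚ_[p]) from by rw [ha, hb]; ring, V.map_one, add_zero] at hNc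
      rw [← hNc]; exact hεp
    · -- a = 0, b ≠ 0
      rw [show a ^ 2 + ε * p + b ^ 2 * (p : ℚ_[p]) ^ 2 = ε * p + b ^ 2 * (p : ℚ_[p]) ^ 2 from by
          rw [ha]; ring,
        show a * b + 1 = (1 : ℚ_[p]) from by rw [ha]; ring, V.map_one, add_zero] at hNc
      set β := b.valuation with hβ
      have hVb : V b = (β : WithTop ℤ) := hVap b hb
      have hVb2 : V (b ^ 2 * (p : ℚ_[p]) ^ 2) = ((2 * β + 2 : ℤ) : WithTop ℤ) := by
        rw [V.map_mul, hsq, hsq, hVb, hVp]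
        exact_mod_cast (by ring : β + β + ((1:ℤ) + 1) = 2 * β + 2)
      by_cases hβ0 : 0 ≤ β
      · refine iff_of_true ?_ (Or.inl ⟨by rw [ha, show V (0:ℚ_[p]) = ⊤ from AddValuation.map_zero _]; exact le_top,
          by rw [hVb]; exact_mod_cast hβ0⟩)
        rw [← hNc]
        refine V.map_le_add hεp ?_
        rw [hVb2]
        exact_mod_cast by omega
      · push_neg at hβ0
        have hVN : V (ε * p + b ^ 2 * (p : ℚ_[p]) ^ 2) = ((2 * β + 2 : ℤ) : WithTop ℤ) := by
          rw [V.map_add_eq_of_lt_right, hVb2]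
          rw [hVb2]
          exact lt_of_lt_of_le (by exact_mod_cast by omega : ((2*β+2 : ℤ) : WithTop ℤ) < ((1:ℤ) : WithTop ℤ)) hεp
        rw [hVN] at hNc
        refine iff_of_false ?_ ?_
        · rw [← hNc]
          intro h
          rw [WithTop.coe_le_coe] at h
          omega
        · rintro (⟨h1, h2⟩ | ⟨h1, _, _⟩)
          · rw [hVb] at h2
            rw [WithTop.coe_le_coe] at h2
            omega
          · exact h1 ha
  · by_cases hb : b = 0
    · -- a ≠ 0, b = 0
      rw [show a ^ 2 + ε * p + b ^ 2 * (p : ℚ_[p]) ^ 2 = a ^ 2 + ε * p from by rw [hb]; ring,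
        show a * b + 1 = (1 : ℚ_[p]) from by rw [hb]; ring, V.map_one, add_zero] at hNc
      set α := a.valuation with hα
      have hVa : V a = (α : WithTop ℤ) := hVap a ha
      have hVa2 : V (a ^ 2) = ((2 * α : ℤ) : WithTop ℤ) := by
        rw [hsq, hVa]; exact_mod_cast (by ring : α + α = 2 * α)
      by_cases hα0 : 1 ≤ α
      · refine iff_of_true ?_ (Or.inl ⟨by rw [hVa]; exact_mod_cast hα0,
          by rw [hb, show V (0:ℚ_[p]) = ⊤ from AddValuation.map_zero _]; exact le_top⟩)
        rw [← hNc]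
        refine V.map_le_add ?_ hεp
        rw [hVa2]
        exact_mod_cast by omega
      · push_neg at hα0
        have hVN : V (a ^ 2 + ε * p) = ((2 * α : ℤ) : WithTop ℤ) := by
          rw [V.map_add_eq_of_lt_left, hVa2]
          rw [hVa2]
          exact lt_of_lt_of_le (by exact_mod_cast by omega : ((2*α : ℤ) : WithTop ℤ) < ((1:ℤ) : WithTop ℤ)) hεp
        rw [hVN] at hNc
        refine iff_of_false ?_ ?_
        · rw [← hNc]
          intro h
          rw [WithTop.coe_le_coe] at h
          omega
        · rintro (⟨h1, h2⟩ | ⟨_, h1, _⟩)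
          · rw [hVa] at h1
            rw [WithTop.coe_le_coe] at h1
            omega
          · exact h1 hb
    · -- a ≠ 0, b ≠ 0
      set α := a.valuation with hα
      set β := b.valuation with hβ
      have hVa : V a = (α : WithTop ℤ) := hVap a ha
      have hVb : V b = (β : WithTop ℤ) := hVap b hb
      have hVa2 : V (a ^ 2) = ((2 * α : ℤ) : WithTop ℤ) := by
        rw [hsq, hVa]; exact_mod_cast (by ring : α + α = 2 * α)
      have hVb2 : V (b ^ 2 * (p : ℚ_[p]) ^ 2) = ((2 * β + 2 : ℤ) : WithTop ℤ) := by
        rw [V.map_mul, hsq, hsq, hVb, hVp]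
        exact_mod_cast (by ring : β + β + ((1:ℤ) + 1) = 2 * β + 2)
      have hVab : V (a * b) = ((α + β : ℤ) : WithTop ℤ) := by
        rw [V.map_mul, hVa, hVb]; exact_mod_cast rfl
      by_cases hR1 : 1 ≤ α ∧ 0 ≤ β
      · -- case (i)
        obtain ⟨h1, h2⟩ := hR1
        have hVd : V (a * b + 1) = ((0 : ℤ) : WithTop ℤ) := by
          rw [V.map_add_eq_of_lt_right, V.map_one]
          · rfl
          · rw [V.map_one, hVab]
            exact_mod_cast by omega
        have hVN : ((1 : ℤ) : WithTop ℤ) ≤ V (a ^ 2 + ε * p + b ^ 2 * (p : ℚ_[p]) ^ 2) := by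
          refine hge3 _ _ _ _ ?_ hεp ?_
          · rw [hVa2]; exact_mod_cast by omega
          · rw [hVb2]; exact_mod_cast by omega
        rw [hVd, WithTop.coe_zero, add_zero] at hNc
        refine iff_of_true (hNc ▸ hVN) (Or.inl ⟨by rw [hVa]; exact_mod_cast h1,
          by rw [hVb]; exact_mod_cast h2⟩)
      · by_cases hR2 : α = β + 1
        · -- case (ii): β ≤ -1 necessarily
          have hβ1 : β ≤ -1 := by
            by_contra h
            exact hR1 ⟨by omega, by omega⟩
          have hVd : V (a * b + 1) = ((2 * β + 1 : ℤ) : WithTop ℤ) := by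
            rw [V.map_add_eq_of_lt_left, hVab, hR2]
            · exact_mod_cast (by ring : β + 1 + β = 2 * β + 1)
            · rw [V.map_one, hVab]
              exact_mod_cast by omega
          have hVN : ((2 * β + 2 : ℤ) : WithTop ℤ) ≤ V (a ^ 2 + ε * p + b ^ 2 * (p : ℚ_[p]) ^ 2) := by
            refine hge3 _ _ _ _ ?_ ?_ ?_
            · rw [hVa2, hR2]; exact_mod_cast by omega
            · exact le_trans (by exact_mod_cast by omega : ((2*β+2:ℤ) : WithTop ℤ) ≤ ((1:ℤ) : WithTop ℤ)) hεp
            · rw [hVb2]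
          rw [hNc, hVd] at hVN
          have := wt_cancel_ge hVN
          refine iff_of_true ?_ (Or.inr ⟨ha, hb, hR2⟩)
          exact le_trans (by exact_mod_cast by omega : ((1:ℤ) : WithTop ℤ) ≤ ((2*β+2 - (2*β+1) : ℤ) : WithTop ℤ)) this
        · -- case (iii): both sides false
          have hnR1 : ¬(1 ≤ α) ∨ ¬(0 ≤ β) := by
            by_contra h
            push_neg at h
            exact hR1 ⟨h.1, h.2⟩
          have hVd_ge : ((min (α + β) 0 : ℤ) : WithTop ℤ) ≤ V (a * b + 1) := by
            refine le_trans ?_ (V.map_add (a * b) 1)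
            rw [hVab, V.map_one]
            rw [WithTop.coe_min, WithTop.coe_zero]
          -- exact value of V N
          have key : ∃ n : ℤ, V (a ^ 2 + ε * p + b ^ 2 * (p : ℚ_[p]) ^ 2) = (n : WithTop ℤ) ∧
              n ≤ min (α + β) 0 := by
            by_cases hab2 : α ≤ β
            · refine ⟨2 * α, ?_, by omega⟩
              rw [← hVa2]
              refine hmin3 _ _ _ ?_ ?_
              · refine lt_of_lt_of_le ?_ hεp
                rw [hVa2]
                have : 2 * α ≤ 0 := by rcases hnR1 with h | h <;> omega
                exact_mod_cast by omega
              · rw [hVa2, hVb2]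
                exact_mod_cast by omega
            · -- β + 1 ≤ α, and α ≠ β + 1, so β + 2 ≤ α
              have hba : β + 2 ≤ α := by omega
              refine ⟨2 * β + 2, ?_, by omega⟩
              rw [← hVb2]
              refine hmin3' _ _ _ ?_ ?_
              · rw [hVa2, hVb2]
                exact_mod_cast by omega
              · refine lt_of_lt_of_le ?_ hεp
                rw [hVb2]
                have : 2 * β + 2 ≤ 0 := by rcases hnR1 with h | h <;> omega
                exact_mod_cast by omega
          obtain ⟨n, hVN, hn⟩ := key
          rw [hVN] at hNc
          have hVc_le := wt_cancel_le hNc.symm hVd_ge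
          refine iff_of_false ?_ ?_
          · intro h
            have := le_trans h hVc_le
            rw [WithTop.coe_le_coe] at this
            omega
          · rintro (⟨h1, h2⟩ | ⟨_, _, h3⟩)
            · rw [hVa] at h1
              rw [hVb] at h2
              rw [WithTop.coe_le_coe] at h1 h2
              exact hR1 ⟨h1, h2⟩
            · exact hR2 h3
end

section
/- Let D be the set of tuples d = (d₁₂,d₁₃,d₁₄,d₂₃,d₂₄,d₃₄) ∈ ℤ_{≥0}⁶ with d₁₂d₃₄ = d₁₃d₂₄ = d₁₄d₂₃ = 0. For d ∈ ℤ_{≥0}⁶ and k ∈ {1,2,3,4}, let Φ_k(d) = Σ_{j: k ∈ {i,j}} d_{ij} (the sum of the three coordinates whose index pair contains k). Then for every n ≥ 1, there is no d ∈ D with Φ₁(d) = Φ₂(d) = Φ₃(d) = Φ₄(d) = n. -/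
theorem stmt15 (n : ℕ) (hn : 1 ≤ n) :
    ¬ ∃ d₁₂ d₁₃ d₁₄ d₂₃ d₂₄ d₃₄ : ℕ,
      d₁₂ * d₃₄ = 0 ∧ d₁₃ * d₂₄ = 0 ∧ d₁₄ * d₂₃ = 0 ∧
      d₁₂ + d₁₃ + d₁₄ = n ∧
      d₁₂ + d₂₃ + d₂₄ = n ∧
      d₁₃ + d₂₃ + d₃₄ = n ∧
      d₁₄ + d₂₄ + d₃₄ = n := by
  rintro ⟨a, b, c, d, e, f, h1, h2, h3, h4, h5, h6, h7⟩
  rcases mul_eq_zero.mp h1 with h | h <;>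
  rcases mul_eq_zero.mp h2 with h' | h' <;>
  rcases mul_eq_zero.mp h3 with h'' | h'' <;> omega
end
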